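/- Let n ≥ 1 and let A, B ∈ ℙ_n. Then for all s, t ∈ ℝ: d(A ♮_s B, A ♮_t B) = |s − t| · d(A, B). That is, the curve t ↦ A ♮_t B is a geodesic for the semi-metric d. -/

import Mathlib

open Matrix
open scoped ComplexOrder

/-- Real power `A^t = exp(t · log A)` of a Hermitian positive definite matrix, defined via
the functional calculus (spectral decomposition). -/
noncomputable def mpow {n : ℕ} (A : Matrix (Fin n) (Fin n) ℂ) (t : ℝ) :
    Matrix (Fin n) (Fin n) ℂ :=
  if hA : A.IsHermitian then
    (hA.eigenvectorUnitary : Matrix (Fin n) (Fin n) ℂ) *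
      Matrix.diagonal (fun i => ((hA.eigenvalues i ^ t : ℝ) : ℂ)) *
      (star (hA.eigenvectorUnitary : Matrix (Fin n) (Fin n) ℂ))
  else A

/-- Logarithm of a Hermitian positive definite matrix via the functional calculus. -/
noncomputable def mlog {n : ℕ} (A : Matrix (Fin n) (Fin n) ℂ) : Matrix (Fin n) (Fin n) ℂ :=
  if hA : A.IsHermitian then
    (hA.eigenvectorUnitary : Matrix (Fin n) (Fin n) ℂ) *
      Matrix.diagonal (fun i => ((Real.log (hA.eigenvalues i) : ℝ) : ℂ)) *
      (star (hA.eigenvectorUnitary : Matrix (Fin n) (Fin n) ℂ))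
  else A

/-- Metric geometric mean `A # B = A^{1/2} (A^{-1/2} B A^{-1/2})^{1/2} A^{1/2}`. -/
noncomputable def geomMean {n : ℕ} (A B : Matrix (Fin n) (Fin n) ℂ) :
    Matrix (Fin n) (Fin n) ℂ :=
  mpow A (1/2) * mpow (mpow A (-(1/2)) * B * mpow A (-(1/2))) (1/2) * mpow A (1/2)

/-- Weighted spectral geometric mean `A ♮_t B = (A⁻¹ # B)^t A (A⁻¹ # B)^t`. -/
noncomputable def spectralMean {n : ℕ} (t : ℝ) (A B : Matrix (Fin n) (Fin n) ℂ) :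
    Matrix (Fin n) (Fin n) ℂ :=
  mpow (geomMean A⁻¹ B) t * A * mpow (geomMean A⁻¹ B) t

/-- The operator norm (largest singular value) of a matrix, i.e. the norm of the induced
continuous linear endomorphism of Euclidean space. -/
noncomputable def opNorm {n : ℕ} (M : Matrix (Fin n) (Fin n) ℂ) : ℝ :=
  ‖Matrix.toEuclideanCLM (𝕜 := ℂ) M‖

/-- The semi-metric `d(A, B) = 2 ‖log (A⁻¹ # B)‖`. -/
noncomputable def smetric {n : ℕ} (A B : Matrix (Fin n) (Fin n) ℂ) : ℝ :=
  2 * opNorm (mlog (geomMean A⁻¹ B))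

set_option maxHeartbeats 1000000
set_option synthInstance.maxHeartbeats 400000
variable {n : ℕ}

lemma contOn (A : Matrix (Fin n) (Fin n) ℂ) (f : ℝ → ℝ) : ContinuousOn f (spectrum ℝ A) :=
  (Matrix.finite_real_spectrum (A := A)).continuousOn f

lemma mpow_eq_cfc {A : Matrix (Fin n) (Fin n) ℂ} (hA : A.IsHermitian) (t : ℝ) :
    mpow A t = cfc (fun x : ℝ => x ^ t) A := by
  rw [hA.cfc_eq, mpow, dif_pos hA]
  rfl

lemma mlog_eq_cfc {A : Matrix (Fin n) (Fin n) ℂ} (hA : A.IsHermitian) :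
    mlog A = cfc Real.log A := by
  rw [hA.cfc_eq, mlog, dif_pos hA]
  rfl

lemma posDef_conj {A B : Matrix (Fin n) (Fin n) ℂ} (hA : A.PosDef) (hB : IsUnit B) :
    (Bᴴ * A * B).PosDef := by
  refine posDef_iff_dotProduct_mulVec.mpr ⟨Matrix.isHermitian_conjTranspose_mul_mul B hA.1, fun x hx => ?_⟩
  have hBx : B *ᵥ x ≠ 0 := by
    intro h
    exact hx <| (Matrix.mulVec_injective_iff_isUnit.mpr hB) (by simpa using h)
  simpa only [star_mulVec, dotProduct_mulVec, vecMul_vecMul] using hA.dotProduct_mulVec_pos hBx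

lemma posDef_herm_conj {A B : Matrix (Fin n) (Fin n) ℂ} (hA : A.PosDef) (hB : B.PosDef) :
    (B * A * B).PosDef := by
  have := posDef_conj hA hB.isUnit
  rwa [hB.1.eq] at this

lemma spectrum_pos {A : Matrix (Fin n) (Fin n) ℂ} (hA : A.PosDef) :
    ∀ x ∈ spectrum ℝ A, 0 < x := by
  rw [hA.1.spectrum_real_eq_range_eigenvalues]
  rintro x ⟨i, rfl⟩
  exact hA.eigenvalues_pos i

lemma cfc_posDef {A : Matrix (Fin n) (Fin n) ℂ} (hA : A.PosDef) {f : ℝ → ℝ}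
    (hf : ∀ x ∈ spectrum ℝ A, 0 < f x) : (cfc f A).PosDef := by
  rw [hA.1.cfc_eq, Matrix.IsHermitian.cfc]
  have hdiag : (Matrix.diagonal (RCLike.ofReal ∘ f ∘ hA.1.eigenvalues) :
      Matrix (Fin n) (Fin n) ℂ).PosDef := by
    rw [Matrix.posDef_diagonal_iff]
    intro i
    have : 0 < f (hA.1.eigenvalues i) := hf _ (hA.1.eigenvalues_mem_spectrum_real i)
    show (0:ℂ) < ((f (hA.1.eigenvalues i) : ℝ) : ℂ)
    exact Complex.zero_lt_real.mpr this
  have hU : IsUnit (star (hA.1.eigenvectorUnitary : Matrix (Fin n) (Fin n) ℂ)) := by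
    have h1 : star (hA.1.eigenvectorUnitary : Matrix (Fin n) (Fin n) ℂ) *
        (hA.1.eigenvectorUnitary : Matrix (Fin n) (Fin n) ℂ) = 1 :=
      Unitary.star_mul_self_of_mem hA.1.eigenvectorUnitary.2
    have h2 : (hA.1.eigenvectorUnitary : Matrix (Fin n) (Fin n) ℂ) *
        star (hA.1.eigenvectorUnitary : Matrix (Fin n) (Fin n) ℂ) = 1 :=
      Unitary.mul_star_self_of_mem hA.1.eigenvectorUnitary.2
    exact ⟨⟨_, _, h1, h2⟩, rfl⟩
  have := posDef_conj hdiag hU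
  rwa [Matrix.star_eq_conjTranspose, Matrix.conjTranspose_conjTranspose] at this

lemma mpow_posDef {C : Matrix (Fin n) (Fin n) ℂ} (hC : C.PosDef) (t : ℝ) :
    (mpow C t).PosDef := by
  rw [mpow_eq_cfc hC.1]
  exact cfc_posDef hC fun x hx => Real.rpow_pos_of_pos (spectrum_pos hC x hx) t

lemma mpow_mul_mpow {C : Matrix (Fin n) (Fin n) ℂ} (hC : C.PosDef) (r s : ℝ) :
    mpow C r * mpow C s = mpow C (r + s) := by
  rw [mpow_eq_cfc hC.1, mpow_eq_cfc hC.1, mpow_eq_cfc hC.1,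
    ← cfc_mul _ _ C (contOn C _) (contOn C _)]
  exact cfc_congr fun x hx => (Real.rpow_add (spectrum_pos hC x hx) r s).symm

lemma mpow_zero_eq {C : Matrix (Fin n) (Fin n) ℂ} (hC : C.PosDef) : mpow C 0 = 1 := by
  rw [mpow_eq_cfc hC.1]
  have : (fun x : ℝ => x ^ (0:ℝ)) = fun _ => 1 := funext fun x => Real.rpow_zero x
  rw [this]
  exact cfc_const_one ℝ C hC.1.isSelfAdjoint

lemma mpow_one_eq {C : Matrix (Fin n) (Fin n) ℂ} (hC : C.PosDef) : mpow C 1 = C := by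
  rw [mpow_eq_cfc hC.1]
  have : (fun x : ℝ => x ^ (1:ℝ)) = fun x => x := funext fun x => Real.rpow_one x
  rw [this]
  exact cfc_id' ℝ C hC.1.isSelfAdjoint

lemma mpow_mpow {C : Matrix (Fin n) (Fin n) ℂ} (hC : C.PosDef) (r s : ℝ) :
    mpow (mpow C r) s = mpow C (r * s) := by
  rw [mpow_eq_cfc (mpow_posDef hC r).1, mpow_eq_cfc hC.1, mpow_eq_cfc hC.1,
    ← cfc_comp (fun x : ℝ => x ^ s) (fun x : ℝ => x ^ r) C hC.1.isSelfAdjoint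
      (((Matrix.finite_real_spectrum (A := C)).image _).continuousOn _) (contOn C _)]
  exact cfc_congr fun x hx => by
    simp only [Function.comp_apply]
    rw [← Real.rpow_mul (spectrum_pos hC x hx).le]

lemma mlog_mpow {C : Matrix (Fin n) (Fin n) ℂ} (hC : C.PosDef) (r : ℝ) :
    mlog (mpow C r) = r • mlog C := by
  rw [mlog_eq_cfc (mpow_posDef hC r).1, mpow_eq_cfc hC.1,
    ← cfc_comp Real.log (fun x : ℝ => x ^ r) C hC.1.isSelfAdjoint
      (((Matrix.finite_real_spectrum (A := C)).image _).continuousOn _) (contOn C _),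
    mlog_eq_cfc hC.1, ← cfc_const_mul r Real.log C (contOn C _)]
  exact cfc_congr fun x hx => by
    simp only [Function.comp_apply]
    rw [Real.log_rpow (spectrum_pos hC x hx)]

lemma inv_eq_mpow {C : Matrix (Fin n) (Fin n) ℂ} (hC : C.PosDef) : C⁻¹ = mpow C (-1) := by
  apply Matrix.inv_eq_left_inv
  calc mpow C (-1) * C = mpow C (-1) * mpow C 1 := by rw [mpow_one_eq hC]
    _ = mpow C (-1 + 1) := mpow_mul_mpow hC _ _
    _ = 1 := by norm_num [mpow_zero_eq hC]

lemma mpow_inv {C : Matrix (Fin n) (Fin n) ℂ} (hC : C.PosDef) (r : ℝ) :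
    mpow C⁻¹ r = mpow C (-r) := by
  rw [inv_eq_mpow hC, mpow_mpow hC, neg_one_mul]

lemma sqrt_sq {N : Matrix (Fin n) (Fin n) ℂ} (hN : N.PosDef) : mpow (N * N) (1/2) = N := by
  have h2 : N * N = mpow N 2 := by
    rw [mpow_eq_cfc hN.1]
    have : (fun x : ℝ => x ^ (2:ℝ)) = fun x => x * x := funext fun x => by
      rw [show (2:ℝ) = ((2:ℕ):ℝ) by norm_num, Real.rpow_natCast, sq]
    rw [this, cfc_mul _ _ N (contOn N _) (contOn N _), cfc_id' ℝ N hN.1.isSelfAdjoint]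
  rw [h2, mpow_mpow hN]
  norm_num [mpow_one_eq hN]

lemma geomMean_posDef {X B : Matrix (Fin n) (Fin n) ℂ} (hX : X.PosDef) (hB : B.PosDef) :
    (geomMean X B).PosDef := by
  unfold geomMean
  have hmid : (mpow X (-(1/2)) * B * mpow X (-(1/2))).PosDef :=
    posDef_herm_conj hB (mpow_posDef hX _)
  exact posDef_herm_conj (mpow_posDef hmid _) (mpow_posDef hX _)

lemma geomMean_inv_conj {X G : Matrix (Fin n) (Fin n) ℂ} (hX : X.PosDef) (hG : G.PosDef) :
    geomMean X⁻¹ (G * X * G) = G := by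
  unfold geomMean
  rw [mpow_inv hX, mpow_inv hX, neg_neg]
  have hP := mpow_posDef hX (1/2)
  have hN : (mpow X (1/2) * G * mpow X (1/2)).PosDef := posDef_herm_conj hG hP
  have hX2 : mpow X (1/2) * mpow X (1/2) = X := by
    rw [mpow_mul_mpow hX]; norm_num [mpow_one_eq hX]
  have hmid : mpow X (1/2) * (G * X * G) * mpow X (1/2)
      = (mpow X (1/2) * G * mpow X (1/2)) * (mpow X (1/2) * G * mpow X (1/2)) := by
    conv_lhs => rw [show G * X * G = G * (mpow X (1/2) * mpow X (1/2)) * G by rw [hX2]]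
    simp only [Matrix.mul_assoc]
  rw [hmid, sqrt_sq hN]
  have hPiP : mpow X (-(1/2)) * mpow X (1/2) = 1 := by
    rw [mpow_mul_mpow hX]; norm_num [mpow_zero_eq hX]
  have hPPi : mpow X (1/2) * mpow X (-(1/2)) = 1 := by
    rw [mpow_mul_mpow hX]; norm_num [mpow_zero_eq hX]
  rw [show mpow X (-(1/2)) * (mpow X (1/2) * G * mpow X (1/2)) * mpow X (-(1/2))
      = (mpow X (-(1/2)) * mpow X (1/2)) * G * (mpow X (1/2) * mpow X (-(1/2))) by
    simp only [Matrix.mul_assoc], hPiP, hPPi, Matrix.one_mul, Matrix.mul_one]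

lemma opNorm_real_smul (r : ℝ) (M : Matrix (Fin n) (Fin n) ℂ) :
    opNorm (r • M) = |r| * opNorm M := by
  unfold opNorm
  have h : (r • M) = (r : ℂ) • M := by
    ext i j; simp [Complex.real_smul]
  rw [h, _root_.map_smul]
  rw [norm_smul (r : ℂ) (Matrix.toEuclideanCLM (𝕜 := ℂ) M), Complex.norm_real, Real.norm_eq_abs]

theorem spectralMean_geodesic {n : ℕ} (hn : 1 ≤ n) (A B : Matrix (Fin n) (Fin n) ℂ)
    (hA : A.PosDef) (hB : B.PosDef) (s t : ℝ) :
    smetric (spectralMean s A B) (spectralMean t A B) = |s - t| * smetric A B := by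
  have hC : (geomMean A⁻¹ B).PosDef := geomMean_posDef hA.inv hB
  set C := geomMean A⁻¹ B with hCdef
  have hX : (spectralMean s A B).PosDef := posDef_herm_conj hA (mpow_posDef hC s)
  have hkey : spectralMean t A B = mpow C (t - s) * spectralMean s A B * mpow C (t - s) := by
    unfold spectralMean
    rw [show mpow C (t - s) * (mpow C s * A * mpow C s) * mpow C (t - s)
        = (mpow C (t - s) * mpow C s) * A * (mpow C s * mpow C (t - s)) by
      simp only [Matrix.mul_assoc], mpow_mul_mpow hC, mpow_mul_mpow hC]
    norm_num
    rfl
  rw [smetric, hkey, geomMean_inv_conj hX (mpow_posDef hC (t - s)), mlog_mpow hC,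
    opNorm_real_smul, smetric, ← hCdef, abs_sub_comm t s]
  ring
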